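/- Let A be a Keigher differential ring, X = Spec^Δ A, O its structure sheaf (sections are functions into the local rings A_p, locally of the form a/b), and O' the residue-field sheaf (functions into K(p) = Frac(A/p)). Let φ(X) : O(X) → O'(X) be the map reducing each value f(p) ∈ A_p modulo pA_p. Then ker φ(X) equals the nilradical of O(X). -/
import Mathlib


/-- An ideal is a differential ideal w.r.t. a family of derivation maps `d`. -/
def IsDiffIdeal {A : Type*} [CommRing A] {k : ℕ} (d : Fin k → A → A) (I : Ideal A) : Prop :=
  ∀ i : Fin k, ∀ x ∈ I, d i x ∈ I

/-- The differential spectrum: prime differential ideals, with the Kolchin topology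
(the subspace topology induced from the Zariski topology on `PrimeSpectrum`). -/
abbrev DiffSpec {A : Type*} [CommRing A] {k : ℕ} (d : Fin k → A → A) :=
  {p : PrimeSpectrum A // IsDiffIdeal d p.asIdeal}

/-- A Keigher ring: the radical of every differential ideal is differential. -/
def IsKeigher {A : Type*} [CommRing A] {k : ℕ} (d : Fin k → A → A) : Prop :=
  ∀ I : Ideal A, IsDiffIdeal d I → IsDiffIdeal d I.radical

/-- `radDiffGen d E` is the smallest radical differential ideal containing `E`. -/
def radDiffGen {A : Type*} [CommRing A] {k : ℕ} (d : Fin k → A → A) (E : Set A) : Ideal A :=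
  sInf {I : Ideal A | E ⊆ I ∧ I.IsRadical ∧ IsDiffIdeal d I}

/-- The canonical map from `A` to the residue field `K(p) = Frac(A/p)`. -/
noncomputable def resMap {A : Type*} [CommRing A] {k : ℕ} {d : Fin k → A → A}
    (p : DiffSpec d) : A →+* FractionRing (A ⧸ p.1.asIdeal) :=
  (algebraMap (A ⧸ p.1.asIdeal) (FractionRing (A ⧸ p.1.asIdeal))).comp
    (Ideal.Quotient.mk p.1.asIdeal)

/-- A function `X → ⊔_p K(p)` is regular if it is locally a quotient `a/b` with `b`
outside every prime differential ideal of the neighborhood. -/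
def RegularRes {A : Type*} [CommRing A] {k : ℕ} {d : Fin k → A → A}
    (f : ∀ p : DiffSpec d, FractionRing (A ⧸ p.1.asIdeal)) : Prop :=
  ∀ p : DiffSpec d, ∃ U : Set (DiffSpec d), IsOpen U ∧ p ∈ U ∧ ∃ a b : A,
    (∀ q ∈ U, b ∉ q.1.asIdeal) ∧ ∀ q ∈ U, f q * resMap q b = resMap q a

/-- A function `X → ⊔_p A_p` is regular if it is locally a quotient `a/b` with `b`
outside every prime differential ideal of the neighborhood. -/
def RegularLoc {A : Type*} [CommRing A] {k : ℕ} {d : Fin k → A → A}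
    (f : ∀ p : DiffSpec d, Localization.AtPrime p.1.asIdeal) : Prop :=
  ∀ p : DiffSpec d, ∃ U : Set (DiffSpec d), IsOpen U ∧ p ∈ U ∧ ∃ a b : A,
    (∀ q ∈ U, b ∉ q.1.asIdeal) ∧
    ∀ q ∈ U, f q * algebraMap A (Localization.AtPrime q.1.asIdeal) b
      = algebraMap A (Localization.AtPrime q.1.asIdeal) a

/-- For a minimal prime `P` over `I`, every `a ∈ P` satisfies `s * a ^ n ∈ I` for some `s ∉ P`. -/
theorem aux_minPrime {A : Type*} [CommRing A] {I P : Ideal A} (hP : P ∈ I.minimalPrimes)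
    {a : A} (ha : a ∈ P) : ∃ n : ℕ, ∃ s ∉ P, s * a ^ n ∈ I := by
  by_contra hcon
  push_neg at hcon
  have hPp : P.IsPrime := hP.1.1
  set T : Submonoid A :=
    { carrier := {x | ∃ s ∉ P, ∃ n : ℕ, x = s * a ^ n}
      mul_mem' := by
        rintro x y ⟨s, hs, n, rfl⟩ ⟨t, ht, m, rfl⟩
        exact ⟨s * t, fun h => ((hPp.mem_or_mem h).elim hs ht), n + m, by ring⟩
      one_mem' := ⟨1, hPp.ne_top ∘ (Ideal.eq_top_iff_one P).2, 0, by ring⟩ } with hT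
  have hdisj : Disjoint (I : Set A) (T : Set A) := by
    rw [Set.disjoint_left]
    rintro x hxI ⟨s, hs, n, rfl⟩
    exact hcon n s hs hxI
  obtain ⟨Q, hQp, hIQ, hQdisj⟩ := Ideal.exists_le_prime_disjoint I T hdisj
  have hQP : Q ≤ P := by
    intro x hxQ
    by_contra hxP
    exact Set.disjoint_left.1 hQdisj hxQ ⟨x, hxP, 0, by ring⟩
  have hPQ : P ≤ Q := hP.2 ⟨hQp, hIQ⟩ hQP
  exact Set.disjoint_left.1 hQdisj (hPQ ha)
    ⟨1, hPp.ne_top ∘ (Ideal.eq_top_iff_one P).2, 1, by ring⟩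

/-- Keigher: a minimal prime over a differential ideal is differential. -/
theorem aux_diffMinPrime {A : Type*} [CommRing A] {k : ℕ} (δ : Fin k → Derivation ℤ A A)
    (hK : IsKeigher (fun i => ⇑(δ i)))
    {I P : Ideal A} (hI : IsDiffIdeal (fun i => ⇑(δ i)) I) (hP : P ∈ I.minimalPrimes) :
    IsDiffIdeal (fun i => ⇑(δ i)) P := by
  have hPp : P.IsPrime := hP.1.1
  have h1P : (1 : A) ∉ P := hPp.ne_top ∘ (Ideal.eq_top_iff_one P).2
  set J : Ideal A :=
    { carrier := {x | ∃ s ∉ P, s * x ∈ I}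
      add_mem' := by
        rintro x y ⟨s, hs, hsx⟩ ⟨t, ht, hty⟩
        refine ⟨s * t, fun h => ((hPp.mem_or_mem h).elim hs ht), ?_⟩
        have : s * t * (x + y) = t * (s * x) + s * (t * y) := by ring
        rw [this]
        exact I.add_mem (I.mul_mem_left _ hsx) (I.mul_mem_left _ hty)
      zero_mem' := ⟨1, h1P, by simp⟩
      smul_mem' := by
        rintro c x ⟨s, hs, hsx⟩
        refine ⟨s, hs, ?_⟩
        have : s * (c • x) = c * (s * x) := by simp [smul_eq_mul]; ring
        rw [this]
        exact I.mul_mem_left _ hsx } with hJ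
  have hJdiff : IsDiffIdeal (fun i => ⇑(δ i)) J := by
    rintro i x ⟨s, hs, hsx⟩
    refine ⟨s * s, fun h => (hPp.mem_or_mem h).elim hs hs, ?_⟩
    have key : s * s * δ i x = s * δ i (s * x) - δ i s * (s * x) := by
      rw [Derivation.leibniz]
      simp [smul_eq_mul]
      ring
    rw [key]
    exact I.sub_mem (I.mul_mem_left _ (hI i _ hsx)) (I.mul_mem_left _ hsx)
  have hJP : J.radical = P := by
    apply le_antisymm
    · have : J ≤ P := by
        rintro x ⟨s, hs, hsx⟩
        exact (hPp.mem_or_mem (hP.1.2 hsx)).resolve_left hs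
      calc J.radical ≤ P.radical := Ideal.radical_mono this
        _ = P := hPp.radical
    · intro x hx
      obtain ⟨n, s, hs, hsn⟩ := aux_minPrime hP hx
      exact ⟨n, s, hs, hsn⟩
  have := hK J hJdiff
  rwa [hJP] at this

/-- The closure of a set under the derivation maps. -/
inductive DClos {A : Type*} [CommRing A] {k : ℕ} (d : Fin k → A → A) (S : Set A) : A → Prop
  | base {x : A} : x ∈ S → DClos d S x
  | step {x : A} (i : Fin k) : DClos d S x → DClos d S (d i x)

/-- The span of a derivation-closed set is a differential ideal. -/
theorem aux_span_diff {A : Type*} [CommRing A] {k : ℕ} (δ : Fin k → Derivation ℤ A A)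
    (S : Set A) :
    IsDiffIdeal (fun i => ⇑(δ i)) (Ideal.span {x | DClos (fun i => ⇑(δ i)) S x}) := by
  intro i x hx
  induction hx using Submodule.span_induction with
  | mem y hy => exact Ideal.subset_span (DClos.step i hy)
  | zero =>
    show δ i 0 ∈ _
    simp
  | add y z hy hz ihy ihz =>
    show δ i (y + z) ∈ _
    rw [map_add]; exact Ideal.add_mem _ ihy ihz
  | smul c y hy ihy =>
    show δ i (c • y) ∈ _
    have : δ i (c • y) = c * δ i y + y * δ i c := by
      rw [smul_eq_mul, Derivation.leibniz]; simp only [smul_eq_mul]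
      try ring
    rw [this]
    exact Ideal.add_mem _ (Ideal.mul_mem_left _ _ ihy) (Ideal.mul_mem_right _ _ hy)

/-- Every element of the derivation closure traces back to a generator. -/
theorem aux_trace {A : Type*} [CommRing A] {k : ℕ} {d : Fin k → A → A} {S : Set A} {t : A}
    (ht : DClos d S t) :
    ∃ g ∈ S, ∀ q : Ideal A, IsDiffIdeal d q → g ∈ q → t ∈ q := by
  induction ht with
  | base hx => exact ⟨_, hx, fun q _ h => h⟩
  | step i _ ih =>
    obtain ⟨g, hg, hgq⟩ := ih
    exact ⟨g, hg, fun q hq h => hq i _ (hgq q hq h)⟩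

/-- For a Keigher ring `A`, the kernel of the reduction map
`φ(X) : O(X) → O'(X)` (reducing each value `f(p) ∈ A_p` modulo `p A_p`, i.e. applying the
canonical map `π p : A_p → K(p)`) is exactly the nilradical of `O(X)`: a global section
`f` reduces to `0` iff some power of `f` vanishes. -/
theorem stmt13 {A : Type*} [CommRing A] {k : ℕ} (δ : Fin k → Derivation ℤ A A)
    (hcomm : ∀ i j a, δ i (δ j a) = δ j (δ i a))
    (hK : IsKeigher (fun i => ⇑(δ i)))
    (π : ∀ p : DiffSpec (fun i => ⇑(δ i)),
      Localization.AtPrime p.1.asIdeal →+* FractionRing (A ⧸ p.1.asIdeal))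
    (hπ : ∀ (p : DiffSpec (fun i => ⇑(δ i))) (a : A),
      π p (algebraMap A (Localization.AtPrime p.1.asIdeal) a) = resMap p a)
    (f : ∀ p : DiffSpec (fun i => ⇑(δ i)), Localization.AtPrime p.1.asIdeal)
    (hf : RegularLoc f) :
    (∀ p, π p (f p) = 0) ↔ ∃ n : ℕ, ∀ p, f p ^ n = 0 := by
  classical
  have hbot : IsDiffIdeal (fun i => ⇑(δ i)) (⊥ : Ideal A) := by
    intro i x hx
    obtain rfl := Ideal.mem_bot.mp hx
    simp
  constructor
  · intro h
    have key : ∀ p : DiffSpec (fun i => ⇑(δ i)), ∃ g : A, g ∉ p.1.asIdeal ∧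
        ∃ n : ℕ, ∀ q : DiffSpec (fun i => ⇑(δ i)), g ∉ q.1.asIdeal → f q ^ n = 0 := by
      intro p
      obtain ⟨U, hU, hpU, a, b, hb, hfb⟩ := hf p
      have haU : ∀ q ∈ U, a ∈ q.1.asIdeal := by
        intro q hq
        have h0 : resMap q a = 0 := by
          rw [← hπ q a, ← hfb q hq, map_mul, h q, zero_mul]
        have h1 : (Ideal.Quotient.mk q.1.asIdeal) a = 0 := by
          apply IsFractionRing.injective (A ⧸ q.1.asIdeal) (FractionRing (A ⧸ q.1.asIdeal))
          simpa [resMap] using h0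
        exact Ideal.Quotient.eq_zero_iff_mem.1 h1
      obtain ⟨V, hV, rfl⟩ := isOpen_induced_iff.mp hU
      obtain ⟨W, ⟨g, rfl⟩, hpW, hWV⟩ :=
        PrimeSpectrum.isTopologicalBasis_basic_opens.exists_subset_of_mem_open hpU hV
      have hgp : g ∉ p.1.asIdeal := by
        simpa [PrimeSpectrum.mem_basicOpen] using hpW
      have hgU : ∀ q : DiffSpec (fun i => ⇑(δ i)), g ∉ q.1.asIdeal →
          q ∈ Subtype.val ⁻¹' V := by
        intro q hgq
        exact hWV (by simpa [PrimeSpectrum.mem_basicOpen] using hgq)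
      have hag : ∀ q : DiffSpec (fun i => ⇑(δ i)), a * g ∈ q.1.asIdeal := by
        intro q
        by_cases hgq : g ∈ q.1.asIdeal
        · exact Ideal.mul_mem_left _ a hgq
        · exact Ideal.mul_mem_right _ _ (haU q (hgU q hgq))
      have hnil : IsNilpotent (a * g) := by
        by_contra hcon
        have hmem : a * g ∉ nilradical A := by simpa [mem_nilradical] using hcon
        obtain ⟨Q, hQprime, hQ⟩ : ∃ Q : Ideal A, Q.IsPrime ∧ a * g ∉ Q := by
          by_contra hc
          push_neg at hc
          exact hmem ((nilradical_eq_sInf A) ▸ Submodule.mem_sInf.2 (fun J hJ => hc J hJ))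
        haveI := hQprime
        obtain ⟨P, hPmin, hPQ⟩ := Ideal.exists_minimalPrimes_le (bot_le : (⊥ : Ideal A) ≤ Q)
        have hPdiff := aux_diffMinPrime δ hK hbot hPmin
        exact hQ (hPQ (hag ⟨⟨P, hPmin.1.1⟩, hPdiff⟩))
      obtain ⟨n, hn⟩ := hnil
      refine ⟨g, hgp, n, fun q hgq => ?_⟩
      have hqU : q ∈ Subtype.val ⁻¹' V := hgU q hgq
      set φ := algebraMap A (Localization.AtPrime q.1.asIdeal) with hφ
      have hbu : IsUnit (φ b) :=
        IsLocalization.map_units (Localization.AtPrime q.1.asIdeal)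
          (⟨b, hb q hqU⟩ : q.1.asIdeal.primeCompl)
      have hgu : IsUnit (φ g) :=
        IsLocalization.map_units (Localization.AtPrime q.1.asIdeal)
          (⟨g, hgq⟩ : q.1.asIdeal.primeCompl)
      have h1 : φ a ^ n * φ g ^ n = 0 := by
        rw [← mul_pow, ← map_mul, ← map_pow, hn, map_zero]
      have h2 : φ a ^ n = 0 := (IsUnit.mul_left_eq_zero (hgu.pow n)).1 h1
      have h3 : f q ^ n * φ b ^ n = 0 := by
        rw [← mul_pow, hfb q hqU]
        exact h2
      exact (IsUnit.mul_left_eq_zero (hbu.pow n)).1 h3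
    choose g hg n hn using key
    set S : Set A := Set.range g with hS
    set D : Set A := {x | DClos (fun i => ⇑(δ i)) S x} with hD
    have hdiff := aux_span_diff δ S
    have h1 : (1 : A) ∈ Ideal.span D := by
      by_contra h1
      have hne : Ideal.span D ≠ ⊤ := fun hh => h1 (hh ▸ Submodule.mem_top)
      obtain ⟨M, hM, hIM⟩ := Ideal.exists_le_maximal _ hne
      haveI := hM.isPrime
      obtain ⟨P, hPmin, _⟩ := Ideal.exists_minimalPrimes_le hIM
      have hPdiff := aux_diffMinPrime δ hK hdiff hPmin
      set q0 : DiffSpec (fun i => ⇑(δ i)) := ⟨⟨P, hPmin.1.1⟩, hPdiff⟩ with hq0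
      exact hg q0 (hPmin.1.2 (Ideal.subset_span (DClos.base (Set.mem_range_self q0))))
    obtain ⟨c, hsupp, hsum⟩ := Submodule.mem_span_set.1 h1
    have htr : ∀ t ∈ c.support, ∃ p : DiffSpec (fun i => ⇑(δ i)),
        ∀ q : DiffSpec (fun i => ⇑(δ i)), t ∉ q.1.asIdeal → f q ^ (n p) = 0 := by
      intro t htF
      obtain ⟨g0, hg0S, hprop⟩ := aux_trace (hsupp htF)
      obtain ⟨p, rfl⟩ := hg0S
      exact ⟨p, fun q htq => hn p q (fun hgq => htq (hprop q.1.asIdeal q.2 hgq))⟩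
    choose ρ hρ using htr
    refine ⟨c.support.attach.sup (fun t => n (ρ t.1 t.2)), fun q => ?_⟩
    obtain ⟨t, htF, htq⟩ : ∃ t ∈ c.support, t ∉ q.1.asIdeal := by
      by_contra hc
      push_neg at hc
      have hone : (1 : A) ∈ q.1.asIdeal := by
        rw [← hsum]
        exact Ideal.sum_mem _ (fun t ht => Submodule.smul_mem _ _ (hc t ht))
      exact q.1.isPrime.ne_top ((Ideal.eq_top_iff_one _).2 hone)
    have h0 : f q ^ (n (ρ t htF)) = 0 := hρ t htF q htq
    have hle : n (ρ t htF) ≤ c.support.attach.sup (fun t => n (ρ t.1 t.2)) :=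
      Finset.le_sup (f := fun t => n (ρ t.1 t.2)) (Finset.mem_attach _ ⟨t, htF⟩)
    calc f q ^ c.support.attach.sup (fun t => n (ρ t.1 t.2))
        = f q ^ (n (ρ t htF)) *
          f q ^ (c.support.attach.sup (fun t => n (ρ t.1 t.2)) - n (ρ t htF)) := by
          rw [← pow_add, Nat.add_sub_cancel' hle]
      _ = 0 := by rw [h0, zero_mul]
  · rintro ⟨n, hn⟩ p
    rcases Nat.eq_zero_or_pos n with rfl | hpos
    · exfalso
      simpa using hn p
    · have hz : π p (f p) ^ n = 0 := by rw [← map_pow, hn p, map_zero]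
      exact (pow_eq_zero_iff hpos.ne').1 hz
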